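/- The integral (1/π) ∫_{-∞}^{∞} (sin t / t)^4 dt equals 2/3. -/

import Mathlib

open MeasureTheory Real intervalIntegral
open scoped FourierTransform RealInnerProductSpace

noncomputable def tri : ℝ → ℝ := fun x => max (1 - |x|) 0

noncomputable def Lam : ℝ → ℂ := fun x => (tri x : ℂ)



lemma tri_nonneg (x : ℝ) : 0 ≤ tri x := le_max_right _ _

lemma tri_eq_zero {x : ℝ} (hx : 1 ≤ |x|) : tri x = 0 :=
  max_eq_right (by linarith)

lemma tri_even (x : ℝ) : tri (-x) = tri x := by simp [tri]

lemma tri_continuous : Continuous tri :=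
  (continuous_const.sub (continuous_abs)).max continuous_const

lemma tri_compact : HasCompactSupport tri := by
  apply HasCompactSupport.intro (isCompact_Icc (a := (-1:ℝ)) (b := 1))
  intro x hx
  apply tri_eq_zero
  simp only [Set.mem_Icc, not_and_or, not_le] at hx
  rw [le_abs]
  rcases hx with h | h
  · right; linarith
  · left; linarith

lemma tri_integrable : Integrable tri := tri_continuous.integrable_of_hasCompactSupport tri_compact


lemma Lam_integrable : Integrable Lam :=
  (Complex.continuous_ofReal.comp tri_continuous).integrable_of_hasCompactSupport
    (tri_compact.comp_left (g := (Complex.ofReal)) rfl)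

-- antiderivative computation
lemma J (c : ℝ) (hc : c ≠ 0) :
    ∫ x in (0:ℝ)..1, (1 - x) * Real.cos (c * x) = (1 - Real.cos c) / c^2 := by
  have key : ∀ x ∈ Set.uIcc (0:ℝ) 1, HasDerivAt
      (fun x : ℝ => (1 - x) * Real.sin (c * x) / c - Real.cos (c * x) / c^2)
      ((1 - x) * Real.cos (c * x)) x := by
    intro x _
    have h1 : HasDerivAt (fun x : ℝ => Real.sin (c * x)) (Real.cos (c*x) * c) x := by
      simpa [mul_comm, Function.comp_def] using (Real.hasDerivAt_sin (c*x)).comp x ((hasDerivAt_id x).const_mul c)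
    have h2 : HasDerivAt (fun x : ℝ => Real.cos (c * x)) (-Real.sin (c*x) * c) x := by
      simpa [mul_comm, Function.comp_def] using (Real.hasDerivAt_cos (c*x)).comp x ((hasDerivAt_id x).const_mul c)
    have h3 : HasDerivAt (fun x : ℝ => (1 - x)) (-1) x := by
      simpa using (hasDerivAt_id x).const_sub 1
    have := ((h3.mul h1).div_const c).sub (h2.div_const (c^2))
    refine this.congr_deriv ?_
    field_simp
    ring
  rw [intervalIntegral.integral_eq_sub_of_hasDerivAt key]
  · simp [Real.sin_zero, Real.cos_zero]
    field_simp
    ring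
  · apply Continuous.intervalIntegrable
    continuity




lemma tri_eq_of_le {x : ℝ} (hx : |x| ≤ 1) : tri x = 1 - |x| := max_eq_left (by linarith)

lemma integral_tri_mul (f : ℝ → ℝ) :
    ∫ x, f x * tri x = ∫ x in (-1:ℝ)..1, f x * (1 - |x|) := by
  rw [← setIntegral_eq_integral_of_forall_compl_eq_zero
      (s := Set.Ioc (-1:ℝ) 1) (f := fun x => f x * tri x) ?_]
  · rw [← intervalIntegral.integral_of_le (by norm_num : (-1:ℝ) ≤ 1)]
    apply intervalIntegral.integral_congr
    intro x hx
    rw [Set.uIcc_of_le (by norm_num : (-1:ℝ) ≤ 1), Set.mem_Icc] at hx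
    show f x * tri x = f x * (1 - |x|)
    rw [tri_eq_of_le (abs_le.2 hx)]
  · intro x hx
    simp only [Set.mem_Ioc, not_and_or, not_lt, not_le] at hx
    have : 1 ≤ |x| := by
      rcases hx with h | h
      · rw [le_abs]; right; linarith
      · rw [le_abs]; left; linarith
    show f x * tri x = 0
    rw [tri_eq_zero this, mul_zero]

lemma interval_even (g : ℝ → ℝ) (hg : Continuous g) (he : ∀ x, g (-x) = g x) :
    ∫ x in (-1:ℝ)..1, g x = 2 * ∫ x in (0:ℝ)..1, g x := by
  have h1 : ∫ x in (-1:ℝ)..0, g x = ∫ x in (0:ℝ)..1, g x := by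
    have := intervalIntegral.integral_comp_neg (a := (0:ℝ)) (b := 1) (f := g)
    simp only [he, neg_zero, neg_neg] at this
    rw [← this]
  rw [← intervalIntegral.integral_add_adjacent_intervals (a := (-1:ℝ)) (b := 0) (c := 1)
    (hg.intervalIntegrable _ _) (hg.intervalIntegrable _ _), h1]
  ring

lemma tri_total : ∫ x, tri x = 1 := by
  have := integral_tri_mul (fun _ => 1)
  simp only [one_mul] at this
  rw [this, interval_even _ (by continuity) (by intro x; simp)]
  have : ∀ x ∈ Set.uIcc (0:ℝ) 1, 1 - |x| = 1 - x := by
    intro x hx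
    rw [Set.uIcc_of_le (by norm_num : (0:ℝ) ≤ 1), Set.mem_Icc] at hx
    rw [abs_of_nonneg hx.1]
  rw [intervalIntegral.integral_congr this]
  simp [intervalIntegral.integral_sub intervalIntegrable_const (intervalIntegral.intervalIntegrable_id)]
  norm_num

lemma tri_sq : ∫ x, tri x * tri x = 2/3 := by
  rw [integral_tri_mul tri, intervalIntegral.integral_congr (g := fun x => (1 - |x|)^2) ?_,
    interval_even _ (by continuity) (by intro x; simp)]
  · have : ∀ x ∈ Set.uIcc (0:ℝ) 1, (1 - |x|)^2 = (fun y => y^2) (1 - x) := by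
      intro x hx
      rw [Set.uIcc_of_le (by norm_num : (0:ℝ) ≤ 1), Set.mem_Icc] at hx
      rw [abs_of_nonneg hx.1]
    rw [intervalIntegral.integral_congr this, intervalIntegral.integral_comp_sub_left (fun y => y^2) 1]
    norm_num [integral_pow]
  · intro x hx
    rw [Set.uIcc_of_le (by norm_num : (-1:ℝ) ≤ 1), Set.mem_Icc] at hx
    show tri x * (1 - |x|) = (1 - |x|)^2
    rw [tri_eq_of_le (abs_le.2 hx)]
    ring



lemma cos_tri (c : ℝ) (hc : c ≠ 0) :
    ∫ x, Real.cos (c * x) * tri x = 2 * (1 - Real.cos c) / c^2 := by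
  rw [integral_tri_mul, interval_even _ (by continuity) (by intro x; simp [Real.cos_neg, mul_comm]),
    intervalIntegral.integral_congr (g := fun x => (1-x) * Real.cos (c*x)) ?_, J c hc]
  · ring
  · intro x hx
    rw [Set.uIcc_of_le (by norm_num : (0:ℝ) ≤ 1), Set.mem_Icc] at hx
    show Real.cos (c*x) * (1 - |x|) = (1-x) * Real.cos (c*x)
    rw [abs_of_nonneg hx.1]; ring

lemma sin_tri (c : ℝ) : ∫ x, Real.sin (c * x) * tri x = 0 := by
  have h := integral_neg_eq_self (fun x => Real.sin (c * x) * tri x) (volume : Measure ℝ)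
  simp only [mul_neg, Real.sin_neg, tri_even, neg_mul] at h
  have h2 : ∫ x, -(Real.sin (c*x) * tri x) = - ∫ x, Real.sin (c*x) * tri x := integral_neg _
  rw [h2] at h
  linarith




lemma exp_split (θ : ℝ) (r : ℝ) :
    Complex.exp (↑θ * Complex.I) • (r : ℂ)
      = ((Real.cos θ * r : ℝ) : ℂ) + ((Real.sin θ * r : ℝ) : ℂ) * Complex.I := by
  rw [Complex.exp_mul_I, smul_eq_mul]
  push_cast
  ring

lemma int_ccs (c : ℝ) : Integrable (fun x => Real.cos (c * x) * tri x) := by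
  exact (((Real.continuous_cos.comp (continuous_const.mul continuous_id)).mul tri_continuous).integrable_of_hasCompactSupport)
    (tri_compact.mul_left)

lemma int_scs (c : ℝ) : Integrable (fun x => Real.sin (c * x) * tri x) := by
  exact (((Real.continuous_sin.comp (continuous_const.mul continuous_id)).mul tri_continuous).integrable_of_hasCompactSupport)
    (tri_compact.mul_left)

lemma fourier_tri (ξ : ℝ) (hξ : ξ ≠ 0) :
    𝓕 Lam ξ = ((Real.sin (π * ξ) / (π * ξ))^2 : ℝ) := by
  have hπ : π ≠ 0 := Real.pi_ne_zero
  have hc : (-2) * π * ξ ≠ 0 := by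
    simp [hξ, hπ]
  rw [Real.fourier_real_eq_integral_exp_smul]
  have : ∀ v : ℝ, Complex.exp (↑(-2 * π * v * ξ) * Complex.I) • Lam v
      = ((Real.cos ((-2*π*ξ) * v) * tri v : ℝ) : ℂ)
        + ((Real.sin ((-2*π*ξ) * v) * tri v : ℝ) : ℂ) * Complex.I := by
    intro v
    rw [show (-2 * π * v * ξ) = (-2*π*ξ) * v by ring]
    exact exp_split _ _
  simp_rw [this]
  have h1 : Integrable (fun v : ℝ => ((Real.cos ((-2)*π*ξ*v) * tri v : ℝ) : ℂ)) :=
    (int_ccs ((-2)*π*ξ)).ofReal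
  have h2 : Integrable (fun v : ℝ => ((Real.sin ((-2)*π*ξ*v) * tri v : ℝ) : ℂ) * Complex.I) :=
    ((int_scs ((-2)*π*ξ)).ofReal).mul_const Complex.I
  have hA : ∫ (a : ℝ), ((Real.cos ((-2)*π*ξ*a) * tri a : ℝ) : ℂ)
      = (((∫ a : ℝ, Real.cos ((-2)*π*ξ*a) * tri a) : ℝ) : ℂ) := _root_.integral_ofReal
  have hB : ∫ (a : ℝ), ((Real.sin ((-2)*π*ξ*a) * tri a : ℝ) : ℂ)
      = (((∫ a : ℝ, Real.sin ((-2)*π*ξ*a) * tri a) : ℝ) : ℂ) := _root_.integral_ofReal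
  rw [integral_add h1 h2, MeasureTheory.integral_mul_const, hA, hB, cos_tri _ hc, sin_tri]
  have hcos : Real.cos ((-2)*π*ξ) = Real.cos (2*(π*ξ)) := by
    rw [show ((-2)*π*ξ) = -(2*(π*ξ)) by ring, Real.cos_neg]
  have hsin : Real.sin (π*ξ) ^ 2 = 1/2 - Real.cos (2*(π*ξ))/2 := Real.sin_sq_eq_half_sub (π*ξ)
  have hne : π * ξ ≠ 0 := mul_ne_zero hπ hξ
  rw [Complex.ofReal_zero, zero_mul, add_zero, Complex.ofReal_inj, hcos, div_pow, hsin]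
  field_simp



lemma Lam_continuous : Continuous Lam := Complex.continuous_ofReal.comp tri_continuous

lemma Lam_even (x : ℝ) : Lam (-x) = Lam x := by simp [Lam, tri]

lemma fourier_cont : Continuous (𝓕 Lam) :=
  VectorFourier.fourierIntegral_continuous Real.continuous_fourierChar
    (by exact continuous_inner) Lam_integrable

lemma fourier_bound (ξ : ℝ) : ‖𝓕 Lam ξ‖ ≤ 2 * (1 + ξ^2)⁻¹ := by
  have h1 : (0:ℝ) < 1 + ξ^2 := by positivity
  rcases le_or_gt (|ξ|) 1 with h | h
  · have hb : ‖𝓕 Lam ξ‖ ≤ ∫ x, ‖Lam x‖ :=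
      VectorFourier.norm_fourierIntegral_le_integral_norm 𝐞 volume _ Lam ξ
    have : ∫ x, ‖Lam x‖ = 1 := by
      rw [← tri_total]
      congr 1 with x
      rw [Lam, Complex.norm_real, Real.norm_eq_abs, abs_of_nonneg (tri_nonneg x)]
    rw [this] at hb
    have h2 : 1 + ξ^2 ≤ 2 := by
      have := sq_abs ξ ▸ (pow_le_one₀ (abs_nonneg ξ) h : |ξ|^2 ≤ 1)
      linarith
    refine hb.trans ?_
    rw [← div_eq_mul_inv, le_div_iff₀ h1]
    linarith
  · have hξ : ξ ≠ 0 := by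
      intro h0; rw [h0] at h; simp at h; linarith
    rw [fourier_tri ξ hξ, Complex.norm_real, Real.norm_eq_abs]
    have hπ : (1:ℝ) ≤ π := by linarith [Real.pi_gt_three]
    have hsq : ξ^2 = |ξ|^2 := (sq_abs ξ).symm
    have h2 : (1:ℝ) ≤ ξ^2 := by rw [hsq]; nlinarith
    have hne : π * ξ ≠ 0 := mul_ne_zero Real.pi_ne_zero hξ
    have hval : (Real.sin (π*ξ) / (π*ξ))^2 ≤ (ξ^2)⁻¹ := by
      rw [div_pow]
      have hd : (0:ℝ) < (π*ξ)^2 := by positivity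
      rw [div_le_iff₀ hd]
      have hsin : Real.sin (π*ξ)^2 ≤ 1 := by
        nlinarith [Real.neg_one_le_sin (π*ξ), Real.sin_le_one (π*ξ)]
      have h3 : (1:ℝ) ≤ π^2 := by nlinarith
      have hkey : ξ^2 ≤ (π*ξ)^2 := by
        calc ξ^2 = 1 * ξ^2 := by ring
        _ ≤ π^2 * ξ^2 := by nlinarith [sq_nonneg ξ]
        _ = (π*ξ)^2 := by ring
      rw [inv_mul_eq_div, le_div_iff₀ (by positivity)]
      nlinarith [sq_nonneg (Real.sin (π*ξ))]
    rw [abs_of_nonneg (by positivity)]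
    refine hval.trans ?_
    rw [← one_div, ← div_eq_mul_inv, div_le_div_iff₀ (by positivity) h1]
    linarith

lemma fourier_integrable : Integrable (𝓕 Lam) := by
  have hmaj : Integrable (fun ξ : ℝ => 2 * (1 + ξ^2)⁻¹) := integrable_inv_one_add_sq.const_mul 2
  refine hmaj.mono fourier_cont.aestronglyMeasurable (Filter.Eventually.of_forall fun ξ => ?_)
  have h1 : (0:ℝ) < 1 + ξ^2 := by positivity
  calc ‖𝓕 Lam ξ‖ ≤ 2 * (1 + ξ^2)⁻¹ := fourier_bound ξ
  _ ≤ ‖2 * (1 + ξ^2)⁻¹‖ := le_abs_self _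



lemma inner_flip : (innerₗ ℝ).flip = innerₗ ℝ := by
  apply LinearMap.ext; intro x; apply LinearMap.ext; intro y
  exact real_inner_comm x y

lemma selfadj : ∫ ξ, (𝓕 Lam ξ) * (𝓕 Lam ξ) = ∫ x, Lam x * (𝓕 (𝓕 Lam)) x := by
  have h := VectorFourier.integral_fourierIntegral_smul_eq_flip (e := 𝐞)
    (L := innerₗ ℝ) (μ := (volume : Measure ℝ)) (ν := (volume : Measure ℝ))
    (f := Lam) (g := 𝓕 Lam) Real.continuous_fourierChar (by exact continuous_inner)
    Lam_integrable fourier_integrable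
  rw [inner_flip] at h
  simp only [smul_eq_mul] at h
  exact h

lemma fourier_fourier (x : ℝ) : 𝓕 (𝓕 Lam) x = Lam x := by
  have h := Lam_integrable.fourierInv_fourier_eq fourier_integrable
    (Lam_continuous.continuousAt (x := -x))
  have h2 := Real.fourierInv_eq_fourier_neg (𝓕 Lam) (-x)
  rw [neg_neg] at h2
  rw [← h2, h, Lam_even]

theorem sinc_fourth_integral :
    (1/Real.pi) * ∫ t : ℝ, (Real.sin t / t)^4 = 2/3 := by
  have hstep : ∫ ξ : ℝ, (((Real.sin (π * ξ) / (π * ξ))^4 : ℝ) : ℂ) = ((2/3 : ℝ) : ℂ) := by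
    have h1 : ∫ ξ : ℝ, (((Real.sin (π * ξ) / (π * ξ))^4 : ℝ) : ℂ)
        = ∫ ξ, (𝓕 Lam ξ) * (𝓕 Lam ξ) := by
      apply MeasureTheory.integral_congr_ae
      filter_upwards [compl_mem_ae_iff.mpr (Real.volume_singleton (a := 0))] with ξ hξ
      have hξ0 : ξ ≠ 0 := hξ
      rw [fourier_tri ξ hξ0]
      push_cast
      ring
    rw [h1, selfadj]
    have h2 : ∫ x, Lam x * (𝓕 (𝓕 Lam)) x = ∫ x, ((tri x * tri x : ℝ) : ℂ) := by
      congr 1 with x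
      rw [fourier_fourier]
      simp [Lam]
    rw [h2]
    rw [show ∫ x, ((tri x * tri x : ℝ) : ℂ) = (((∫ x, tri x * tri x) : ℝ) : ℂ) from
      _root_.integral_ofReal]
    rw [tri_sq]
  have hreal : ∫ ξ : ℝ, (Real.sin (π * ξ) / (π * ξ))^4 = 2/3 := by
    have := (_root_.integral_ofReal (𝕜 := ℂ)
      (f := fun ξ : ℝ => (Real.sin (π * ξ) / (π * ξ))^4) (μ := volume)).symm.trans hstep
    exact Complex.ofReal_inj.mp this
  have hsub : ∫ ξ : ℝ, (Real.sin (π * ξ) / (π * ξ))^4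
      = |π⁻¹| • ∫ t : ℝ, (Real.sin t / t)^4 :=
    MeasureTheory.Measure.integral_comp_mul_left (fun t => (Real.sin t / t)^4) π
  rw [hsub] at hreal
  rw [abs_of_pos (inv_pos.mpr Real.pi_pos), smul_eq_mul] at hreal
  rw [one_div]
  exact hreal
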